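/- Let m ≥ 2 and k ≥ 1 be integers. There exists a finite connected mixed graph G such that the relation R on A(G) has exactly m equivalence classes and G has exactly k frontier vertices, if and only if m − 1 ≤ k. -/

import Mathlib

/-- An A-trail (alternating trail) in the mixed graph `(V, A)`: a sequence of `k ≥ 1`
pairwise distinct arcs `a 0, …, a (k-1)` of `G` with a vertex sequence
`v 0, …, v k` such that the `i`-th arc is `(v i, v (i+1))` or `(v (i+1), v i)`,
and consecutive arcs alternate in direction. -/
def IsATrail {V : Type*} (A : V → V → Prop) (k : ℕ) (a : ℕ → V × V) (v : ℕ → V) : Prop :=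
  1 ≤ k ∧
  (∀ i, i < k → A (a i).1 (a i).2) ∧
  (∀ i, i < k → ∀ j, j < k → a i = a j → i = j) ∧
  (∀ i, i < k → a i = (v i, v (i + 1)) ∨ a i = (v (i + 1), v i)) ∧
  (∀ i, i + 1 < k → (a i = (v i, v (i + 1)) ↔ a (i + 1) = (v (i + 2), v (i + 1))))

/-- The relation `R` on arcs: `x R y` iff some A-trail has first arc `x` and last arc `y`. -/
def ATrailRel {V : Type*} (A : V → V → Prop) (x y : V × V) : Prop :=
  ∃ k a v, IsATrail A k a v ∧ a 0 = x ∧ a (k - 1) = y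

/-- A frontier vertex: a vertex incident with two arcs lying in different classes of
the equivalence relation `ATrailRel`. -/
def IsFrontier {V : Type*} (A : V → V → Prop) (w : V) : Prop :=
  ∃ x y : V × V, A x.1 x.2 ∧ A y.1 y.2 ∧ (x.1 = w ∨ x.2 = w) ∧ (y.1 = w ∨ y.2 = w) ∧
    ¬ ATrailRel A x y

/-- The underlying simple graph of a mixed graph. -/
def UnderGraph {V : Type*} (A : V → V → Prop) : SimpleGraph V where
  Adj u v := u ≠ v ∧ (A u v ∨ A v u)
  symm := ⟨by intro u v h; exact ⟨h.1.symm, h.2.symm⟩⟩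
  loopless := ⟨fun v h => h.1 rfl⟩

section helpers
variable {V : Type*} {A : V → V → Prop}

lemma atrail_refl {x : V × V} (hx : A x.1 x.2) : ATrailRel A x x := by
  refine ⟨1, fun _ => x, fun n => if n = 0 then x.1 else x.2, ⟨le_refl 1, ?_, ?_, ?_, ?_⟩, rfl, rfl⟩
  · intro i _; exact hx
  · intro i hi j hj _; omega
  · intro i hi
    interval_cases i
    simp
  · intro i hi; omega

lemma atrail_head {x y : V × V} (hx : A x.1 x.2) (hy : A y.1 y.2) (hne : x ≠ y)
    (h : x.2 = y.2) : ATrailRel A x y := by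
  refine ⟨2, fun n => if n = 0 then x else y,
    fun n => if n = 0 then x.1 else if n = 1 then x.2 else y.1, ⟨by norm_num, ?_, ?_, ?_, ?_⟩, rfl, rfl⟩
  · intro i hi; interval_cases i <;> simpa
  · intro i hi j hj hij
    interval_cases i <;> interval_cases j <;> simp_all
  · intro i hi; interval_cases i
    · simp
    · right; exact Prod.ext rfl h.symm
  · intro i hi
    have : i = 0 := by omega
    subst this
    simp only [reduceIte]
    constructor
    · intro _; exact Prod.ext rfl h.symm
    · intro _; exact Prod.ext rfl rfl

lemma atrail_tail {x y : V × V} (hx : A x.1 x.2) (hy : A y.1 y.2) (hne : x ≠ y)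
    (h : x.1 = y.1) (hx' : x.1 ≠ x.2) (hy' : y.1 ≠ y.2) : ATrailRel A x y := by
  refine ⟨2, fun n => if n = 0 then x else y,
    fun n => if n = 0 then x.2 else if n = 1 then x.1 else y.2, ⟨by norm_num, ?_, ?_, ?_, ?_⟩, rfl, rfl⟩
  · intro i hi; interval_cases i <;> simpa
  · intro i hi j hj hij
    interval_cases i <;> interval_cases j <;> simp_all
  · intro i hi; interval_cases i
    · right; simp
    · left; simp [h]
  · intro i hi
    have : i = 0 := by omega
    subst this
    simp only [reduceIte]
    constructor
    · intro hc; exact absurd (congrArg Prod.fst hc) hx'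
    · intro hc; exact absurd (congrArg Prod.snd hc).symm (by simpa [h] using hy')

lemma atrail_consec {k : ℕ} {a : ℕ → V × V} {v : ℕ → V} (ht : IsATrail A k a v) :
    ∀ i, i + 1 < k → ((a i).2 = (a (i+1)).2 ∨ (a i).1 = (a (i+1)).1) := by
  obtain ⟨h1, h2, h3, h4, h5⟩ := ht
  intro i hi
  by_cases hc : a i = (v i, v (i + 1))
  · left
    have := (h5 i hi).mp hc
    rw [hc, this]
  · right
    have h6 := (h4 i (by omega)).resolve_left hc
    have h7 : a (i+1) ≠ (v (i+2), v (i+1)) := fun hc2 => hc ((h5 i hi).mpr hc2)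
    have h8 := (h4 (i+1) hi).resolve_right h7
    rw [h6, h8]

lemma atrail_invariant {α : Sort*} (f : V × V → α)
    (H : ∀ x y : V × V, A x.1 x.2 → A y.1 y.2 → (x.2 = y.2 ∨ x.1 = y.1) → f x = f y)
    {x y : V × V} (h : ATrailRel A x y) : f x = f y := by
  obtain ⟨k, a, v, ht, h0, hk⟩ := h
  have key : ∀ i, i < k → f (a 0) = f (a i) := by
    intro i
    induction i with
    | zero => intro _; rfl
    | succ n ih =>
      intro hn
      have := atrail_consec ht n hn
      exact (ih (by omega)).trans (H (a n) (a (n+1)) (ht.2.1 n (by omega)) (ht.2.1 (n+1) hn) this)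
  rw [← h0, ← hk]
  have hk1 := ht.1
  exact key (k-1) (by omega)

end helpers

section construction

variable (m e : ℕ)

/-- vertex type -/
abbrev CV := Fin (m+1) ⊕ Fin e

/-- arc relation -/
def CA : CV m e → CV m e → Prop := fun x y =>
  match x, y with
  | .inl i, .inl j => (j:ℕ) = (i:ℕ) + 1
  | .inl i, .inr _ => (i:ℕ) = 0
  | .inr _, .inl i => (i:ℕ) = 2
  | .inr _, .inr _ => False

/-- class function -/
def cf : CV m e × CV m e → ℕ := fun p =>
  match p.2 with
  | .inl j => (j:ℕ)
  | .inr _ => 1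

variable {m e : ℕ}

lemma cf_inv : ∀ x y : CV m e × CV m e, CA m e x.1 x.2 → CA m e y.1 y.2 →
    (x.2 = y.2 ∨ x.1 = y.1) → cf m e x = cf m e y := by
  rintro ⟨x1, x2⟩ ⟨y1, y2⟩ hx hy (h | h)
  · simp only at h; subst h; rfl
  · simp only at h; subst h
    cases x1 with
    | inl i =>
      cases x2 with
      | inl j => cases y2 with
        | inl j' => simp [CA] at hx hy; simp [cf, hx, hy]
        | inr _ => simp [CA] at hx hy; simp [cf, hx, hy]
      | inr _ => cases y2 with
        | inl j' => simp [CA] at hx hy; simp [cf, hx, hy]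
        | inr _ => rfl
    | inr i =>
      cases x2 with
      | inl j => cases y2 with
        | inl j' => simp [CA] at hx hy; simp [cf, hx, hy]
        | inr _ => simp [CA] at hy
      | inr _ => simp [CA] at hx

lemma not_rel_of_cf_ne {x y : CV m e × CV m e} (h : cf m e x ≠ cf m e y) :
    ¬ ATrailRel (CA m e) x y :=
  fun hr => h (atrail_invariant (cf m e) cf_inv hr)

end construction
section construction2
variable {m e : ℕ} (hm : 2 ≤ m)

/-- target frontier predicate -/
def FP {m e : ℕ} : CV m e → Prop := fun w =>
  match w with
  | .inl t => (t:ℕ) ≠ 0 ∧ (t:ℕ) ≠ m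
  | .inr _ => True

include hm in
lemma frontier_iff (w : CV m e) : IsFrontier (CA m e) w ↔ FP w := by
  cases w with
  | inr j =>
    simp only [FP, iff_true]
    refine ⟨(.inl ⟨0, by omega⟩, .inr j), (.inr j, .inl ⟨2, by omega⟩), ?_, ?_, ?_, ?_, ?_⟩
    · show CA m e _ _; simp [CA]
    · show CA m e _ _; simp [CA]
    · right; rfl
    · left; rfl
    · apply not_rel_of_cf_ne; simp [cf]
  | inl t =>
    simp only [FP]
    constructor
    · rintro ⟨x, y, hx, hy, hix, hiy, hn⟩
      constructor
      · -- t ≠ 0 : no arc has head inl t with t=0, all arcs at inl t share tail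
        intro ht0
        have head_none : ∀ z : CV m e × CV m e, CA m e z.1 z.2 → z.2 ≠ Sum.inl t := by
          rintro ⟨z1, z2⟩ hz hzz
          simp only at hzz; subst hzz
          cases z1 with
          | inl i => simp [CA, ht0] at hz
          | inr i => simp [CA, ht0] at hz
        have hx1 : x.1 = Sum.inl t := hix.resolve_right (head_none x hx)
        have hy1 : y.1 = Sum.inl t := hiy.resolve_right (head_none y hy)
        by_cases hxy : x = y
        · exact hn (hxy ▸ atrail_refl hx)
        · refine hn (atrail_tail hx hy hxy (hx1.trans hy1.symm) ?_ ?_)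
          · rw [hx1]; exact fun hc => head_none x hx hc.symm
          · rw [hy1]; exact fun hc => head_none y hy hc.symm
      · -- t ≠ m : no arc has tail inl t with t=m, all arcs at inl t share head
        intro htm
        have tail_none : ∀ z : CV m e × CV m e, CA m e z.1 z.2 → z.1 ≠ Sum.inl t := by
          rintro ⟨z1, z2⟩ hz hzz
          simp only at hzz; subst hzz
          cases z2 with
          | inl i => simp only [CA] at hz; omega
          | inr i => simp only [CA] at hz; omega
        have hx2 : x.2 = Sum.inl t := hix.resolve_left (tail_none x hx)
        have hy2 : y.2 = Sum.inl t := hiy.resolve_left (tail_none y hy)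
        by_cases hxy : x = y
        · exact hn (hxy ▸ atrail_refl hx)
        · exact hn (atrail_head hx hy hxy (hx2.trans hy2.symm))
    · rintro ⟨ht0, htm⟩
      have htle : (t:ℕ) ≤ m := by omega
      refine ⟨(.inl ⟨(t:ℕ) - 1, by omega⟩, .inl t), (.inl t, .inl ⟨(t:ℕ) + 1, by omega⟩),
        ?_, ?_, ?_, ?_, ?_⟩
      · show CA m e _ _; simp only [CA]; omega
      · show CA m e _ _; simp only [CA]
      · right; rfl
      · left; rfl
      · apply not_rel_of_cf_ne; simp [cf]

end construction2
section construction3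
variable {m e : ℕ}

lemma card_frontier (hm : 2 ≤ m) :
    Nat.card {w : CV m e // IsFrontier (CA m e) w} = (m - 1) + e := by
  have bij : Function.Bijective (fun s : Fin (m-1) ⊕ Fin e =>
      (match s with
       | .inl s => ⟨Sum.inl ⟨(s:ℕ)+1, by omega⟩, (frontier_iff hm _).mpr
           ⟨by simp, by simp; omega⟩⟩
       | .inr j => ⟨Sum.inr j, (frontier_iff hm _).mpr trivial⟩ :
       {w : CV m e // IsFrontier (CA m e) w})) := by
    constructor
    · rintro (s | s) (s' | s') h <;> simp only [Subtype.mk.injEq, Sum.inl.injEq,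
        Sum.inr.injEq, Fin.mk.injEq] at h
      · congr 1; exact Fin.ext (by omega)
      · exact absurd h (by simp)
      · exact absurd h (by simp)
      · congr 1
    · rintro ⟨w, hw⟩
      rw [frontier_iff hm] at hw
      cases w with
      | inl t =>
        obtain ⟨ht0, htm⟩ := hw
        have htle : (t:ℕ) ≤ m := by omega
        refine ⟨Sum.inl ⟨(t:ℕ)-1, by omega⟩, ?_⟩
        simp only [Subtype.mk.injEq, Sum.inl.injEq]
        exact Fin.ext (show (t:ℕ)-1+1 = (t:ℕ) by omega)
      | inr j => exact ⟨Sum.inr j, rfl⟩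
  have := Nat.card_eq_of_bijective _ bij
  rw [← this, Nat.card_sum]
  simp

lemma card_classes (hm : 2 ≤ m) :
    Nat.card (Quot (fun x y : {p : CV m e × CV m e // CA m e p.1 p.2} =>
      ATrailRel (CA m e) x.val y.val)) = m := by
  set rel := fun x y : {p : CV m e × CV m e // CA m e p.1 p.2} =>
      ATrailRel (CA m e) x.val y.val with hrel
  have cF : Quot rel → ℕ := Quot.lift (fun z => cf m e z.val)
    (fun a b h => atrail_invariant (cf m e) cf_inv h)
  set g2 : Fin m → Quot rel := fun i =>
    Quot.mk rel ⟨(Sum.inl ⟨(i:ℕ), by omega⟩, Sum.inl ⟨(i:ℕ)+1, by omega⟩),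
      show CA m e _ _ from rfl⟩ with hg2
  have hbij : Function.Bijective g2 := by
    constructor
    · intro i j h
      have := congrArg (Quot.lift (fun z : {p : CV m e × CV m e // CA m e p.1 p.2} => cf m e z.val)
        (fun a b h => atrail_invariant (cf m e) cf_inv h)) h
      simp only [hg2, Quot.lift_mk, cf] at this
      exact Fin.ext (by omega)
    · intro q
      obtain ⟨⟨⟨x1, x2⟩, hx⟩, rfl⟩ := Quot.exists_rep q
      cases x1 with
      | inl i =>
        cases x2 with
        | inl j =>
          have hj : (j:ℕ) = (i:ℕ) + 1 := hx
          refine ⟨⟨(j:ℕ)-1, by omega⟩, ?_⟩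
          simp only [hg2]
          congr 1
          exact Subtype.ext (Prod.ext (congrArg Sum.inl (Fin.ext (show (j:ℕ)-1 = (i:ℕ) by omega)))
            (congrArg Sum.inl (Fin.ext (show (j:ℕ)-1+1 = (j:ℕ) by omega))))
        | inr j =>
          have hi : (i:ℕ) = 0 := hx
          refine ⟨⟨0, by omega⟩, Quot.sound ?_⟩
          refine atrail_tail (show CA m e _ _ from rfl) hx ?_ ?_ ?_ ?_
          · intro hc
            exact absurd (congrArg Prod.snd hc) (by simp)
          · exact congrArg Sum.inl (Fin.ext (show (0:ℕ) = (i:ℕ) by omega))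
          · intro hc
            rw [Sum.inl.injEq, Fin.mk.injEq] at hc
            omega
          · simp
      | inr j =>
        cases x2 with
        | inl i2 =>
          have hi : (i2:ℕ) = 2 := hx
          refine ⟨⟨1, by omega⟩, Quot.sound ?_⟩
          refine atrail_head (show CA m e _ _ from rfl) hx ?_ ?_
          · intro hc
            exact absurd (congrArg Prod.fst hc) (by simp)
          · exact congrArg Sum.inl (Fin.ext (show (1:ℕ)+1 = (i2:ℕ) by omega))
        | inr j2 => exact absurd hx (by simp [CA])
  have := Nat.card_eq_of_bijective _ hbij
  rw [← this]
  simp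

lemma conn_construction (hm : 2 ≤ m) : (UnderGraph (CA m e)).Connected := by
  have reach : ∀ w : CV m e, (UnderGraph (CA m e)).Reachable (Sum.inl ⟨0, by omega⟩) w := by
    have key : ∀ n (h : n < m + 1),
        (UnderGraph (CA m e)).Reachable (Sum.inl ⟨0, by omega⟩) (Sum.inl ⟨n, h⟩) := by
      intro n
      induction n with
      | zero => intro h; rfl
      | succ p ih =>
        intro h
        refine (ih (by omega)).trans (SimpleGraph.Adj.reachable ?_)
        refine (show _ ≠ _ ∧ _ from ⟨?_, Or.inl (show CA m e _ _ from rfl)⟩)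
        intro hc
        rw [Sum.inl.injEq, Fin.mk.injEq] at hc
        omega
    rintro (t | j)
    · have := key (t:ℕ) t.isLt
      simpa using this
    · exact SimpleGraph.Adj.reachable (show _ ≠ _ ∧ _ from ⟨by simp, Or.inl (show CA m e _ _ from rfl)⟩)
  haveI : Nonempty (CV m e) := ⟨Sum.inl ⟨0, by omega⟩⟩
  exact SimpleGraph.Connected.mk (fun u v => (reach u).symm.trans (reach v))

end construction3

section forward

lemma forward_dir {V : Type} [Fintype V] {A : V → V → Prop}
    (hconn : (UnderGraph A).Connected) {m k : ℕ} (hm : 2 ≤ m)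
    (hQ : Nat.card (Quot (fun x y : {p : V × V // A p.1 p.2} =>
      ATrailRel A x.val y.val)) = m)
    (hF : Nat.card {w : V // IsFrontier A w} = k) : m ≤ k + 1 := by
  classical
  set rel : {p : V × V // A p.1 p.2} → {p : V × V // A p.1 p.2} → Prop :=
    fun x y => ATrailRel A x.val y.val with hreldef
  set c : {p : V × V // A p.1 p.2} → Quot rel := Quot.mk rel with hcdef
  set inc : {p : V × V // A p.1 p.2} → V → Prop :=
    fun x w => x.val.1 = w ∨ x.val.2 = w with hincdef
  have ctype : ∀ (w : V) (x y : {p : V × V // A p.1 p.2}), inc x w → inc y w →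
      ((x.val.2 = w) ↔ (y.val.2 = w)) → c x = c y := by
    intro w x y hx hy hiff
    by_cases hxy : x = y
    · rw [hxy]
    · by_cases h2 : x.val.2 = w
      · exact Quot.sound (atrail_head x.prop y.prop (fun hc => hxy (Subtype.ext hc))
          (h2.trans (hiff.mp h2).symm))
      · have hx1 : x.val.1 = w := hx.resolve_right h2
        have hy2 : ¬ y.val.2 = w := fun hc => h2 (hiff.mpr hc)
        have hy1 : y.val.1 = w := hy.resolve_right hy2
        exact Quot.sound (atrail_tail x.prop y.prop (fun hc => hxy (Subtype.ext hc))
          (hx1.trans hy1.symm) (fun hc => h2 (hc.symm.trans hx1))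
          (fun hc => hy2 (hc.symm.trans hy1)))
  have pair_eq : ∀ (w : V) (x y z : {p : V × V // A p.1 p.2}), inc x w → inc y w → inc z w →
      c x ≠ c y → (c z = c x ∨ c z = c y) := by
    intro w x y z hx hy hz hne
    by_cases hzx : (z.val.2 = w) ↔ (x.val.2 = w)
    · exact Or.inl (ctype w z x hz hx hzx)
    · refine Or.inr (ctype w z y hz hy ?_)
      by_cases h1 : (x.val.2 = w) ↔ (y.val.2 = w)
      · exact absurd (ctype w x y hx hy h1) hne
      · tauto
  let H : SimpleGraph (Quot rel) := {
    Adj := fun q q' => q ≠ q' ∧ ∃ x y w, inc x w ∧ inc y w ∧ c x = q ∧ c y = q'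
    symm := ⟨by rintro q q' ⟨hne, x, y, w, hx, hy, hcx, hcy⟩
                exact ⟨hne.symm, y, x, w, hy, hx, hcy, hcx⟩⟩
    loopless := ⟨fun q h => h.1 rfl⟩ }
  have reach_shared : ∀ (w : V) (x y : {p : V × V // A p.1 p.2}), inc x w → inc y w →
      H.Reachable (c x) (c y) := by
    intro w x y hx hy
    by_cases h : c x = c y
    · rw [h]
    · exact SimpleGraph.Adj.reachable ⟨h, x, y, w, hx, hy, rfl, rfl⟩
  have reach_walk : ∀ (u u' : V) (p : (UnderGraph A).Walk u u')
      (x y : {p : V × V // A p.1 p.2}), inc x u → inc y u' → H.Reachable (c x) (c y) := by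
    intro u u' p
    induction p with
    | nil => intro x y hx hy; exact reach_shared _ x y hx hy
    | @cons u1 u2 u3 h p ih =>
      intro x y hx hy
      obtain ⟨hne, hA | hA⟩ := h
      · exact (reach_shared u1 x ⟨(u1,u2), hA⟩ hx (Or.inl rfl)).trans
          (ih ⟨(u1,u2), hA⟩ y (Or.inr rfl) hy)
      · exact (reach_shared u1 x ⟨(u2,u1), hA⟩ hx (Or.inr rfl)).trans
          (ih ⟨(u2,u1), hA⟩ y (Or.inl rfl) hy)
  haveI hne : Nonempty (Quot rel) := by
    have h0 : 0 < Nat.card (Quot rel) := by rw [hQ]; omega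
    exact (Nat.card_pos_iff.mp h0).1
  have Hconn : H.Connected := by
    refine SimpleGraph.Connected.mk ?_
    intro q q'
    obtain ⟨x, rfl⟩ := Quot.exists_rep q
    obtain ⟨y, rfl⟩ := Quot.exists_rep q'
    obtain ⟨p⟩ := hconn.preconnected x.val.1 y.val.1
    exact reach_walk _ _ p x y (Or.inl rfl) (Or.inl rfl)
  obtain ⟨q0⟩ := hne
  have key : ∀ q : Quot rel, q ≠ q0 → ∃ w : {w : V // IsFrontier A w},
      ∃ x y : {p : V × V // A p.1 p.2}, inc x w.val ∧ inc y w.val ∧ c x ≠ c y ∧ c y = q ∧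
        H.dist q0 (c x) < H.dist q0 q := by
    intro q hq
    have hd : 0 < H.dist q0 q := Hconn.pos_dist_of_ne (Ne.symm hq)
    obtain ⟨p, hp⟩ := (Hconn.preconnected q q0).exists_walk_length_eq_dist
    cases p with
    | nil =>
      rw [SimpleGraph.dist_comm] at hd
      rw [← hp] at hd
      simp at hd
    | @cons _ u _ hadj tail =>
      obtain ⟨hnadj, x, y, w, hx, hy, hcx, hcy⟩ := hadj
      have hdu : H.dist q0 u < H.dist q0 q := by
        have h1 : H.dist u q0 ≤ tail.length := SimpleGraph.dist_le tail
        have h2 : tail.length + 1 = H.dist q q0 := by simpa using hp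
        have h3 : H.dist q0 u = H.dist u q0 := SimpleGraph.dist_comm
        have h4 : H.dist q0 q = H.dist q q0 := SimpleGraph.dist_comm
        omega
      have hcne : c x ≠ c y := by rw [hcx, hcy]; exact hnadj
      have hfront : IsFrontier A w := ⟨x.val, y.val, x.prop, y.prop, hx, hy,
        fun hr => hcne (Quot.sound hr)⟩
      exact ⟨⟨w, hfront⟩, y, x, hy, hx, hcne.symm, hcx, by rw [hcy]; exact hdu⟩
  choose φ hφ using key
  set ψ : Quot rel → Option {w : V // IsFrontier A w} :=
    fun q => if h : q = q0 then none else some (φ q h) with hψdef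
  have hinj : Function.Injective ψ := by
    intro a b hab
    by_cases ha : a = q0 <;> by_cases hb : b = q0
    · rw [ha, hb]
    · simp only [hψdef, dif_pos ha, dif_neg hb] at hab; exact absurd hab (by simp)
    · simp only [hψdef, dif_pos hb, dif_neg ha] at hab; exact absurd hab (by simp)
    · simp only [hψdef, dif_neg ha, dif_neg hb, Option.some.injEq] at hab
      obtain ⟨x, y, hx, hy, hne1, hcy1, hlt1⟩ := hφ a ha
      obtain ⟨x', y', hx', hy', hne2, hcy2, hlt2⟩ := hφ b hb
      rw [hab] at hx hy
      by_cases hcyy : c y' = c y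
      · rw [← hcy1, ← hcy2, hcyy]
      · exfalso
        have h1 : c y' = c x := ((pair_eq _ x y y' hx hy hy' hne1).resolve_right hcyy)
        have h2 : c x' = c x ∨ c x' = c y := pair_eq _ x y x' hx hy hx' hne1
        have h3 : c x' = c y := h2.resolve_left (fun hc => hne2 (hc.trans h1.symm))
        have eb : b = c x := hcy2.symm.trans h1
        have ea : a = c x' := hcy1.symm.trans h3.symm
        rw [eb] at hlt2
        rw [ea] at hlt1
        omega
  have hle := Nat.card_le_card_of_injective ψ hinj
  have hopt : Nat.card (Option {w : V // IsFrontier A w}) = k + 1 := by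
    rw [Nat.card_congr (Equiv.optionEquivSumPUnit.{0,0} _), Nat.card_sum, hF]
    simp
  rw [hQ, hopt] at hle
  exact hle

end forward


/-- for integers `m ≥ 2` and `k ≥ 1`, there exists a finite connected
mixed graph on which `R` has exactly `m` equivalence classes and which has exactly `k`
frontier vertices, iff `m - 1 ≤ k`. -/
theorem stmt_13 (m k : ℕ) (hm : 2 ≤ m) (hk : 1 ≤ k) :
    (∃ (V : Type) (_ : Fintype V) (A : V → V → Prop),
      (UnderGraph A).Connected ∧
      Nat.card (Quot (fun x y : {p : V × V // A p.1 p.2} =>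
        ATrailRel A x.val y.val)) = m ∧
      Nat.card {w : V // IsFrontier A w} = k) ↔ m - 1 ≤ k := by
  constructor
  · rintro ⟨V, fV, A, hconn, hQ, hF⟩
    haveI := fV
    have := forward_dir hconn hm hQ hF
    omega
  · intro hmk
    refine ⟨CV m (k - (m-1)), inferInstance, CA m (k - (m-1)), conn_construction hm,
      card_classes hm, ?_⟩
    rw [card_frontier hm]
    omega
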